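/- (Lemma 5.2, quantitative escape-time estimate) Suppose V satisfies (V₁), let H > 0, set m := ((2-α) C₁ / (2H))^{1/α}, and let D be a constant with 0 < D < min{1, H m^α / C₂}. Let T > 0, R > L > 0, and let u : [-T/2, T/2] → ℝ^N \ {0} be continuous, twice continuously differentiable on (-T/2, T/2), satisfying ü + ∇V(u) = 0 and ½|u̇|² + V(u) = H on (-T/2, T/2), with |u(t)| ≥ m for all t, |u(-T/2)| = |u(T/2)| = R, and such that the set {t ∈ [-T/2, T/2] : |u(t)| ≤ L} is nonempty with supremum t₊. Then √(H - D C₂ / m^α) · (R - L) ≤ √2 · H · (T/2 - t₊). -/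
import Mathlib


open scoped InnerProductSpace
open scoped Topology

/-- Lemma 5.2 (quantitative escape-time estimate): with
`m = ((2-α) C₁ / (2H))^(1/α)`, `0 < D < min 1 (H m^α / C₂)`, for a solution `u`
on `[-T/2, T/2]` with `‖u(±T/2)‖ = R`, `‖u‖ ≥ m`, and
`tp = sup {t : ‖u t‖ ≤ L}`, one has
`√(H - D C₂ / m^α) (R - L) ≤ √2 H (T/2 - tp)`. -/
theorem stmt_11 {N : ℕ} (hN : 2 ≤ N) (V : EuclideanSpace ℝ (Fin N) → ℝ)
    (hV : ContDiffOn ℝ 1 V {0}ᶜ) (α : ℝ) (hα : α ∈ Set.Ioo (0 : ℝ) 2)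
    (hV1 : ∀ x : EuclideanSpace ℝ (Fin N), x ≠ 0 →
      ⟪x, gradient V x⟫_ℝ = -α * V x ∧ -α * V x < 0)
    (H : ℝ) (hH : 0 < H)
    (C₁ C₂ m : ℝ)
    (hC₁ : C₁ = sInf (V '' Metric.sphere (0 : EuclideanSpace ℝ (Fin N)) 1))
    (hC₂ : C₂ = sSup (V '' Metric.sphere (0 : EuclideanSpace ℝ (Fin N)) 1))
    (hm : m = ((2 - α) * C₁ / (2 * H)) ^ α⁻¹)
    (D : ℝ) (hD0 : 0 < D) (hD1 : D < min 1 (H * m ^ α / C₂))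
    (T : ℝ) (hT : 0 < T) (R L : ℝ) (hL : 0 < L) (hLR : L < R)
    (u : ℝ → EuclideanSpace ℝ (Fin N))
    (hu : ContinuousOn u (Set.Icc (-(T/2)) (T/2)))
    (hu0 : ∀ t ∈ Set.Icc (-(T/2)) (T/2), u t ≠ 0)
    (hu2 : ContDiffOn ℝ 2 u (Set.Ioo (-(T/2)) (T/2)))
    (hode : ∀ t ∈ Set.Ioo (-(T/2)) (T/2), deriv (deriv u) t + gradient V (u t) = 0)
    (henergy : ∀ t ∈ Set.Ioo (-(T/2)) (T/2), (1/2) * ‖deriv u t‖ ^ 2 + V (u t) = H)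
    (hlow : ∀ t ∈ Set.Icc (-(T/2)) (T/2), m ≤ ‖u t‖)
    (hend₁ : ‖u (-(T/2))‖ = R) (hend₂ : ‖u (T/2)‖ = R)
    (hne : {t ∈ Set.Icc (-(T/2)) (T/2) | ‖u t‖ ≤ L}.Nonempty) :
    Real.sqrt (H - D * C₂ / m ^ α) * (R - L) ≤
      Real.sqrt 2 * H * (T/2 - sSup {t ∈ Set.Icc (-(T/2)) (T/2) | ‖u t‖ ≤ L}) := by
  have hα0 : 0 < α := hα.1
  -- V is positive off zero
  have hVpos : ∀ x : EuclideanSpace ℝ (Fin N), x ≠ 0 → 0 < V x := by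
    intro x hx
    have h2 := (hV1 x hx).2
    nlinarith
  -- the unit sphere is nonempty and compact, V continuous on it
  have hsph : (Metric.sphere (0 : EuclideanSpace ℝ (Fin N)) 1).Nonempty := by
    refine ⟨EuclideanSpace.single (⟨0, by omega⟩ : Fin N) (1 : ℝ), ?_⟩
    simp [EuclideanSpace.norm_single]
  have hsub : Metric.sphere (0 : EuclideanSpace ℝ (Fin N)) 1 ⊆ {0}ᶜ := by
    intro x hx
    simp only [Metric.mem_sphere, dist_zero_right] at hx
    simp only [Set.mem_compl_iff, Set.mem_singleton_iff]
    intro h; rw [h] at hx; simp at hx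
  have hVc : ContinuousOn V (Metric.sphere (0 : EuclideanSpace ℝ (Fin N)) 1) :=
    (hV.continuousOn).mono hsub
  have hcomp : IsCompact (V '' Metric.sphere (0 : EuclideanSpace ℝ (Fin N)) 1) :=
    (isCompact_sphere 0 1).image_of_continuousOn hVc
  have hImNe : (V '' Metric.sphere (0 : EuclideanSpace ℝ (Fin N)) 1).Nonempty :=
    hsph.image V
  have hC₁pos : 0 < C₁ := by
    rw [hC₁]
    obtain ⟨x, hx, hxv⟩ := hcomp.sInf_mem hImNe
    rw [← hxv]
    exact hVpos x (hsub hx)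
  have hC₂pos : 0 < C₂ := by
    rw [hC₂]
    obtain ⟨x, hx, hxv⟩ := hcomp.sSup_mem hImNe
    rw [← hxv]
    exact hVpos x (hsub hx)
  -- m > 0, m^α > 0
  have hmpos : 0 < m := by
    rw [hm]
    apply Real.rpow_pos_of_pos
    have : 0 < 2 - α := by linarith [hα.2]
    positivity
  have hmapos : 0 < m ^ α := Real.rpow_pos_of_pos hmpos α
  -- the set S and its sup
  set S : Set ℝ := {t ∈ Set.Icc (-(T/2)) (T/2) | ‖u t‖ ≤ L} with hS
  have hSsub : S ⊆ Set.Icc (-(T/2)) (T/2) := fun t ht => ht.1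
  have hSbdd : BddAbove S := BddAbove.mono hSsub bddAbove_Icc
  have hSclosed : IsClosed S := by
    have : S = Set.Icc (-(T/2)) (T/2) ∩ (fun t => ‖u t‖) ⁻¹' Set.Iic L := by
      ext t; simp [hS]
    rw [this]
    exact (hu.norm).preimage_isClosed_of_isClosed isClosed_Icc isClosed_Iic
  set tp : ℝ := sSup S with htpdef
  have htS : tp ∈ S := hSclosed.csSup_mem hne hSbdd
  have htIcc : tp ∈ Set.Icc (-(T/2)) (T/2) := htS.1
  have htL : ‖u tp‖ ≤ L := htS.2
  have htlt : tp < T/2 := by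
    rcases lt_or_eq_of_le htIcc.2 with h | h
    · exact h
    · exfalso; rw [h, hend₂] at htL; linarith
  -- derivative bound
  set c : ℝ := Real.sqrt (2 * H) with hc
  have hcnn : 0 ≤ c := Real.sqrt_nonneg _
  have hdiff : ∀ t ∈ Set.Ioo (-(T/2)) (T/2), HasDerivAt u (deriv u t) t := by
    intro t ht
    have hd : DifferentiableOn ℝ u (Set.Ioo (-(T/2)) (T/2)) :=
      hu2.differentiableOn (by norm_num)
    exact ((hd t ht).differentiableAt (isOpen_Ioo.mem_nhds ht)).hasDerivAt
  have hbound : ∀ t ∈ Set.Ioo (-(T/2)) (T/2), ‖deriv u t‖ ≤ c := by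
    intro t ht
    have hVu : 0 < V (u t) := hVpos _ (hu0 t (Set.Ioo_subset_Icc_self ht))
    have he := henergy t ht
    rw [hc, Real.le_sqrt (norm_nonneg _) (by positivity)]
    nlinarith
  have key : ∀ x ∈ Set.Ioo (-(T/2)) (T/2), ∀ y ∈ Set.Ioo (-(T/2)) (T/2),
      ‖u y - u x‖ ≤ c * ‖y - x‖ := by
    intro x hx y hy
    exact Convex.norm_image_sub_le_of_norm_hasDerivWithin_le
      (fun t ht => (hdiff t ht).hasDerivWithinAt) hbound (convex_Ioo _ _) hx hy
  -- Step A: for x in (tp, T/2)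
  have hA : ∀ x ∈ Set.Ioo tp (T/2), ‖u (T/2) - u x‖ ≤ c * (T/2 - x) := by
    intro x hx
    have hxI : x ∈ Set.Ioo (-(T/2)) (T/2) := ⟨lt_of_le_of_lt htIcc.1 hx.1, hx.2⟩
    have hfilt : (𝓝[Set.Ioo x (T/2)] (T/2)).NeBot := right_nhdsWithin_Ioo_neBot hx.2
    have hle : 𝓝[Set.Ioo x (T/2)] (T/2) ≤ 𝓝[Set.Icc (-(T/2)) (T/2)] (T/2) :=
      nhdsWithin_mono _ (fun y hy => ⟨le_trans hxI.1.le hy.1.le, hy.2.le⟩)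
    have h1 : Filter.Tendsto (fun y => ‖u y - u x‖) (𝓝[Set.Ioo x (T/2)] (T/2))
        (𝓝 ‖u (T/2) - u x‖) := by
      have := (hu (T/2) (Set.right_mem_Icc.2 (by linarith))).mono_left hle
      exact ((this.sub continuousWithinAt_const).norm)
    have h2 : Filter.Tendsto (fun y => c * (y - x)) (𝓝[Set.Ioo x (T/2)] (T/2))
        (𝓝 (c * (T/2 - x))) := by
      apply Filter.Tendsto.mono_left _ nhdsWithin_le_nhds
      exact ((Filter.tendsto_id.sub tendsto_const_nhds)).const_mul c
    refine le_of_tendsto_of_tendsto h1 h2 (eventually_mem_nhdsWithin.mono ?_)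
    intro y hy
    have hyI : y ∈ Set.Ioo (-(T/2)) (T/2) := ⟨lt_trans hxI.1 hy.1, hy.2⟩
    calc ‖u y - u x‖ ≤ c * ‖y - x‖ := key x hxI y hyI
      _ = c * (y - x) := by rw [Real.norm_eq_abs, abs_of_pos (by linarith [hy.1])]
  -- Step B: limit x → tp
  have hB : ‖u (T/2) - u tp‖ ≤ c * (T/2 - tp) := by
    have hfilt : (𝓝[Set.Ioo tp (T/2)] tp).NeBot := left_nhdsWithin_Ioo_neBot htlt
    have hle : 𝓝[Set.Ioo tp (T/2)] tp ≤ 𝓝[Set.Icc (-(T/2)) (T/2)] tp :=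
      nhdsWithin_mono _ (fun y hy => ⟨le_trans htIcc.1 hy.1.le, hy.2.le⟩)
    have h1 : Filter.Tendsto (fun x => ‖u (T/2) - u x‖) (𝓝[Set.Ioo tp (T/2)] tp)
        (𝓝 ‖u (T/2) - u tp‖) := by
      have := (hu tp htIcc).mono_left hle
      exact ((continuousWithinAt_const.sub this).norm)
    have h2 : Filter.Tendsto (fun x => c * (T/2 - x)) (𝓝[Set.Ioo tp (T/2)] tp)
        (𝓝 (c * (T/2 - tp))) := by
      apply Filter.Tendsto.mono_left _ nhdsWithin_le_nhds
      exact ((tendsto_const_nhds.sub Filter.tendsto_id)).const_mul c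
    exact le_of_tendsto_of_tendsto h1 h2 (eventually_mem_nhdsWithin.mono (fun x hx => hA x hx))
  -- chain of inequalities
  have hRL : R - L ≤ c * (T/2 - tp) := by
    have : R - L ≤ ‖u (T/2)‖ - ‖u tp‖ := by rw [hend₂]; linarith
    calc R - L ≤ ‖u (T/2)‖ - ‖u tp‖ := this
      _ ≤ ‖u (T/2) - u tp‖ := norm_sub_norm_le _ _
      _ ≤ c * (T/2 - tp) := hB
  -- final comparison
  have hsq : Real.sqrt (H - D * C₂ / m ^ α) ≤ Real.sqrt H := by
    apply Real.sqrt_le_sqrt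
    have : 0 ≤ D * C₂ / m ^ α := by positivity
    linarith
  have hprod : Real.sqrt H * c = Real.sqrt 2 * H := by
    have hss : Real.sqrt H * Real.sqrt H = H := Real.mul_self_sqrt hH.le
    rw [hc, Real.sqrt_mul (by norm_num) H]
    linear_combination Real.sqrt 2 * hss
  calc Real.sqrt (H - D * C₂ / m ^ α) * (R - L)
      ≤ Real.sqrt H * (R - L) := by
        apply mul_le_mul_of_nonneg_right hsq (by linarith)
    _ ≤ Real.sqrt H * (c * (T/2 - tp)) := by
        apply mul_le_mul_of_nonneg_left hRL (Real.sqrt_nonneg _)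
    _ = Real.sqrt 2 * H * (T/2 - tp) := by rw [← mul_assoc, hprod]
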